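/- Let N be a positive natural number and M an N×N matrix over the bicomplex numbers 𝔹ℂ. Let Q = [[0, M̄],[M, 0]] and R = [[Re^i(M), −Im^i(M)],[−Im^i(M), −Re^i(M)]], and let F = [[I, iI],[I, −iI]], all 2N×2N block matrices over 𝔹ℂ (I the N×N identity). If V is an invertible 2N×2N matrix over 𝔹ℂ and Λ is a diagonal 2N×2N matrix over 𝔹ℂ with R = V·Λ·V⁻¹, then F·V is invertible and Q = (F·V)·Λ·(F·V)⁻¹. -/

import Mathlib

open scoped TensorProduct

/-- The bicomplex numbers `𝔹ℂ = ℂ ⊗[ℝ] ℂ`, a commutative ℝ-algebra. -/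
abbrev BC : Type := ℂ ⊗[ℝ] ℂ

/-- The first imaginary unit `i` of the bicomplex numbers. -/
noncomputable def BC.i : BC := Complex.I ⊗ₜ[ℝ] (1 : ℂ)

/-- The second imaginary unit `j` of the bicomplex numbers. -/
noncomputable def BC.j : BC := (1 : ℂ) ⊗ₜ[ℝ] Complex.I

/-- Bar-conjugation `z₁ + j z₂ ↦ z̄₁ + j z̄₂` (complex conjugation in `i`),
a ring (indeed ℝ-algebra) homomorphism of `𝔹ℂ`. -/
noncomputable def BC.bar : BC →ₐ[ℝ] BC :=
  Algebra.TensorProduct.map Complex.conjAe.toAlgHom (AlgHom.id ℝ ℂ)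

/-- The subalgebra `ℂ(j) = {x₁ + j x₂ : x₁, x₂ ∈ ℝ}` of `𝔹ℂ`,
realized as the range of the canonical map `ℂ → ℂ ⊗[ℝ] ℂ`, `z ↦ 1 ⊗ z`. -/
noncomputable def BC.Cj : Subalgebra ℝ BC :=
  (Algebra.TensorProduct.includeRight : ℂ →ₐ[ℝ] BC).range

/-- `Re^i(b) = (b + b̄)/2`. -/
noncomputable def BC.ReI (b : BC) : BC := (2 : ℝ)⁻¹ • (b + BC.bar b)

/-- `Im^i(b) = (b - b̄)/(2i)`; since `(2i)⁻¹ = -i/2`, this equals `((b̄ - b) * i)/2`. -/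
noncomputable def BC.ImI (b : BC) : BC := (2 : ℝ)⁻¹ • ((BC.bar b - b) * BC.i)

noncomputable def BC.c : BC := algebraMap ℝ BC 2⁻¹

lemma BC.hc : BC.c * 2 = 1 := by
  rw [BC.c, ← map_ofNat (algebraMap ℝ BC) 2, ← map_mul,
    show (2:ℝ)⁻¹ * 2 = 1 by norm_num, map_one]

lemma BC.i_mul_i : BC.i * BC.i = -1 := by
  rw [BC.i, Algebra.TensorProduct.tmul_mul_tmul, Complex.I_mul_I, one_mul]
  rw [show ((-1 : ℂ) : ℂ) ⊗ₜ[ℝ] (1:ℂ) = -((1:ℂ) ⊗ₜ[ℝ] (1:ℂ)) by rw [← TensorProduct.neg_tmul]]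
  rw [Algebra.TensorProduct.one_def]

lemma BC.ReI_eq (b : BC) : BC.ReI b = BC.c * (b + BC.bar b) := by
  rw [BC.ReI]; exact Algebra.smul_def ((2:ℝ)⁻¹) (b + BC.bar b)

lemma BC.ImI_eq (b : BC) : BC.ImI b = BC.c * ((BC.bar b - b) * BC.i) := by
  rw [BC.ImI]; exact Algebra.smul_def ((2:ℝ)⁻¹) ((BC.bar b - b) * BC.i)

lemma BC.e11 (b : BC) : BC.ReI b - BC.i * BC.ImI b = BC.bar b := by
  rw [BC.ReI_eq, BC.ImI_eq]
  linear_combination (-(BC.c * (BC.bar b - b))) * BC.i_mul_i + (BC.bar b) * BC.hc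

lemma BC.e12 (b : BC) : -(BC.ImI b) - BC.i * BC.ReI b = -(BC.i * BC.bar b) := by
  rw [BC.ReI_eq, BC.ImI_eq]
  linear_combination (-(BC.i * BC.bar b)) * BC.hc

lemma BC.e21 (b : BC) : BC.ReI b + BC.i * BC.ImI b = b := by
  rw [BC.ReI_eq, BC.ImI_eq]
  linear_combination (BC.c * (BC.bar b - b)) * BC.i_mul_i + b * BC.hc

lemma BC.e22 (b : BC) : -(BC.ImI b) + BC.i * BC.ReI b = BC.i * b := by
  rw [BC.ReI_eq, BC.ImI_eq]
  linear_combination (BC.i * b) * BC.hc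


set_option maxHeartbeats 1000000 in
set_option synthInstance.maxHeartbeats 400000 in
/-- With `Q = [[0, M̄],[M, 0]]`,
`R = [[Re^i(M), −Im^i(M)],[−Im^i(M), −Re^i(M)]]` and `F = [[I, iI],[I, −iI]]`:
if `V` is invertible and `Λ` is diagonal with `R = V·Λ·V⁻¹`, then `F·V` is
invertible and `Q = (F·V)·Λ·(F·V)⁻¹`. -/
theorem eigendecomposition_Q_of_R (N : ℕ) (hN : 0 < N) (M : Matrix (Fin N) (Fin N) BC)
    (Q R F : Matrix (Fin N ⊕ Fin N) (Fin N ⊕ Fin N) BC)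
    (hQ : Q = Matrix.fromBlocks 0 (M.map BC.bar) M 0)
    (hR : R = Matrix.fromBlocks (M.map BC.ReI) (-(M.map BC.ImI))
      (-(M.map BC.ImI)) (-(M.map BC.ReI)))
    (hF : F = Matrix.fromBlocks 1 (BC.i • (1 : Matrix (Fin N) (Fin N) BC)) 1
      (-(BC.i • (1 : Matrix (Fin N) (Fin N) BC))))
    (V Λ : Matrix (Fin N ⊕ Fin N) (Fin N ⊕ Fin N) BC)
    (hV : IsUnit V) (hΛ : Λ.IsDiag) (hRV : R = V * Λ * V⁻¹) :
    IsUnit (F * V) ∧ Q = (F * V) * Λ * (F * V)⁻¹ := by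
  set G : Matrix (Fin N ⊕ Fin N) (Fin N ⊕ Fin N) BC :=
    Matrix.fromBlocks (BC.c • 1) (BC.c • 1)
      ((-(BC.c * BC.i)) • 1) ((BC.c * BC.i) • 1) with hG
  have hFG : F * G = 1 := by
    rw [hF, hG, Matrix.fromBlocks_multiply, ← Matrix.fromBlocks_one, Matrix.fromBlocks_inj]
    refine ⟨?_, ?_, ?_, ?_⟩ <;>
    · ext i j
      simp [Matrix.mul_apply, Matrix.one_apply]
      split
      · first
        | linear_combination (-BC.c) * BC.i_mul_i + BC.hc
        | linear_combination BC.c * BC.i_mul_i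
      · rfl
  have hFu : IsUnit F := IsUnit.of_mul_eq_one G hFG
  have hFdet : IsUnit F.det := (Matrix.isUnit_iff_isUnit_det F).mp hFu
  have hQF : Q * F = F * R := by
    rw [hQ, hR, hF, Matrix.fromBlocks_multiply, Matrix.fromBlocks_multiply,
      Matrix.fromBlocks_inj]
    refine ⟨?_, ?_, ?_, ?_⟩ <;>
    · ext i j
      simp [Matrix.mul_apply, Matrix.one_apply, Matrix.map_apply, Finset.sum_ite_eq,
        mul_comm]
      first
      | linear_combination (BC.e11 (M i j)).symm
      | linear_combination (BC.e12 (M i j)).symm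
      | linear_combination (BC.e21 (M i j)).symm
      | linear_combination (BC.e22 (M i j)).symm
  have hQR : Q = F * R * F⁻¹ := by
    calc Q = Q * (F * F⁻¹) := by rw [Matrix.mul_nonsing_inv F hFdet, mul_one]
    _ = (Q * F) * F⁻¹ := by rw [mul_assoc]
    _ = F * R * F⁻¹ := by rw [hQF]
  refine ⟨hFu.mul hV, ?_⟩
  rw [hQR, hRV, Matrix.mul_inv_rev]
  simp only [Matrix.mul_assoc]
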